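/- Let φ_1, …, φ_8 be unit vectors in ℝ³. Then max_{1 ≤ i < j ≤ 8} |⟨φ_i, φ_j⟩| ≥ 3/5. -/

import Mathlib

open Finset

/-- Kronecker delta on `Fin 3`. -/
noncomputable def del3 (i j : Fin 3) : ℝ := if i = j then 1 else 0

/-- Traceless symmetric 2-tensor attached to a vector. -/
noncomputable def Ht (x : Fin 3 → ℝ) (i j : Fin 3) : ℝ :=
  x i * x j - (1/3) * del3 i j

/-- Harmonic (traceless symmetric) 4-tensor attached to a vector. -/
noncomputable def Hf (x : Fin 3 → ℝ) (i j k l : Fin 3) : ℝ :=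
  x i * x j * x k * x l
  - (1/7) * (x i * x j * del3 k l + x i * x k * del3 j l + x i * x l * del3 j k
    + x j * x k * del3 i l + x j * x l * del3 i k + x k * x l * del3 i j)
  + (1/35) * (del3 i j * del3 k l + del3 i k * del3 j l + del3 i l * del3 j k)

lemma key2 (x y : Fin 3 → ℝ) (hx : x 0 ^ 2 + x 1 ^ 2 + x 2 ^ 2 = 1)
    (hy : y 0 ^ 2 + y 1 ^ 2 + y 2 ^ 2 = 1) :
    ∑ i : Fin 3, ∑ j : Fin 3, Ht x i j * Ht y i j
      = (x 0 * y 0 + x 1 * y 1 + x 2 * y 2) ^ 2 - 1/3 := by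
  simp only [Ht, del3, Fin.sum_univ_three]
  simp only [Fin.reduceEq, reduceIte]
  linear_combination (-1/3 : ℝ) * hx + (-1/3 : ℝ) * hy

set_option maxHeartbeats 4000000 in
lemma key4 (x y : Fin 3 → ℝ) (hx : x 0 ^ 2 + x 1 ^ 2 + x 2 ^ 2 = 1)
    (hy : y 0 ^ 2 + y 1 ^ 2 + y 2 ^ 2 = 1) :
    ∑ i : Fin 3, ∑ j : Fin 3, ∑ k : Fin 3, ∑ l : Fin 3, Hf x i j k l * Hf y i j k l
      = (x 0 * y 0 + x 1 * y 1 + x 2 * y 2) ^ 4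
        - (6/7) * (x 0 * y 0 + x 1 * y 1 + x 2 * y 2) ^ 2 + 3/35 := by
  simp only [Hf, del3, Fin.sum_univ_three]
  simp only [Fin.reduceEq, reduceIte]
  linear_combination
    (((-9:ℝ)/245) + ((6:ℝ)/49)*(y 2)^2 + ((6:ℝ)/49)*(y 1)^2 + ((48:ℝ)/49)*(y 0)^2
      + ((-6:ℝ)/7)*(y 0)^2*(y 2)^2 + ((-6:ℝ)/7)*(y 0)^2*(y 1)^2 + ((-6:ℝ)/7)*(y 0)^4
      + ((3:ℝ)/35)*(x 2)^2 + ((-6:ℝ)/7)*(x 2)^2*(y 2)^2 + ((-12:ℝ)/7)*(x 1)*(x 2)*(y 1)*(y 2)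
      + ((3:ℝ)/35)*(x 1)^2 + ((-6:ℝ)/7)*(x 1)^2*(y 1)^2 + ((-12:ℝ)/7)*(x 0)*(x 2)*(y 0)*(y 2)
      + ((-12:ℝ)/7)*(x 0)*(x 1)*(y 0)*(y 1) + ((3:ℝ)/35)*(x 0)^2 + ((-6:ℝ)/7)*(x 0)^2*(y 0)^2) * hx
    + (((3:ℝ)/35) + ((3:ℝ)/35)*(y 2)^2 + ((3:ℝ)/35)*(y 1)^2 + ((-27:ℝ)/35)*(y 0)^2
      + ((-6:ℝ)/7)*(x 2)^2*(y 2)^2 + ((6:ℝ)/7)*(x 2)^2*(y 0)^2 + ((-12:ℝ)/7)*(x 1)*(x 2)*(y 1)*(y 2)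
      + ((-6:ℝ)/7)*(x 1)^2*(y 1)^2 + ((6:ℝ)/7)*(x 1)^2*(y 0)^2 + ((-12:ℝ)/7)*(x 0)*(x 2)*(y 0)*(y 2)
      + ((-12:ℝ)/7)*(x 0)*(x 1)*(y 0)*(y 1)) * hy

/-- Expanding a square of a sum of vectors. -/
lemma sum_sq_expand {ι κ : Type*} [Fintype ι] [Fintype κ] (f : ι → κ → ℝ) :
    ∑ i : ι, ∑ j : ι, ∑ a : κ, f i a * f j a = ∑ a : κ, (∑ i : ι, f i a) ^ 2 :=
  calc ∑ i : ι, ∑ j : ι, ∑ a : κ, f i a * f j a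
      = ∑ i : ι, ∑ a : κ, ∑ j : ι, f i a * f j a :=
        Finset.sum_congr rfl fun i _ => Finset.sum_comm
    _ = ∑ a : κ, ∑ i : ι, ∑ j : ι, f i a * f j a := Finset.sum_comm
    _ = ∑ a : κ, (∑ i : ι, f i a) ^ 2 := by
        refine Finset.sum_congr rfl fun a _ => ?_
        rw [sq, Finset.sum_mul_sum]

/-- Any `8` unit vectors `φ₁, …, φ₈` in `ℝ³` satisfy
`max_{1 ≤ i < j ≤ 8} |⟨φᵢ, φⱼ⟩| ≥ 3/5`. -/
theorem eight_packing_coherence_lower_bound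
    (φ : Fin 8 → EuclideanSpace ℝ (Fin 3)) (hunit : ∀ i, ‖φ i‖ = 1) :
    ∃ i j : Fin 8, i < j ∧ (3 / 5 : ℝ) ≤ |(inner ℝ (φ i) (φ j) : ℝ)| := by
  by_contra hcon
  push_neg at hcon
  set g : Fin 8 → Fin 8 → ℝ := fun i j => inner ℝ (φ i) (φ j) with hg
  have hip : ∀ x y : EuclideanSpace ℝ (Fin 3),
      (inner ℝ x y : ℝ) = x 0 * y 0 + x 1 * y 1 + x 2 * y 2 := by
    intro x y
    simp [PiLp.inner_apply, RCLike.inner_apply, Fin.sum_univ_three]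
    ring
  have hsymm : ∀ i j, g j i = g i j := fun i j => real_inner_comm _ _
  have hn : ∀ i, (φ i) 0 ^ 2 + (φ i) 1 ^ 2 + (φ i) 2 ^ 2 = 1 := by
    intro i
    have h2 : (inner ℝ (φ i) (φ i) : ℝ) = 1 := by
      rw [real_inner_self_eq_norm_sq, hunit i]; norm_num
    rw [hip] at h2
    linear_combination h2
  have hdiag : ∀ i, g i i = 1 := by
    intro i
    have : (inner ℝ (φ i) (φ i) : ℝ) = 1 := by
      rw [real_inner_self_eq_norm_sq, hunit i]; norm_num
    simpa [hg] using this
  have hoff : ∀ i j, i ≠ j → |g i j| < 3/5 := by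
    intro i j hij
    rcases lt_or_gt_of_ne hij with h | h
    · exact hcon i j h
    · rw [hsymm]
      exact hcon j i h
  have hgform : ∀ i j, g i j = (φ i) 0 * (φ j) 0 + (φ i) 1 * (φ j) 1 + (φ i) 2 * (φ j) 2 := by
    intro i j; rw [hg]; exact hip _ _
  have hcard7 : ∀ i : Fin 8, (Finset.univ.erase i).card = 7 := by
    intro i
    rw [Finset.card_erase_of_mem (Finset.mem_univ i), Finset.card_univ]
    rfl
  -- inequality from the degree-2 kernel
  have ineqA : 0 ≤ ∑ i : Fin 8, ∑ j : Fin 8, ((g i j) ^ 2 - 1/3) := by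
    have h := sum_sq_expand (fun (i : Fin 8) (p : Fin 3 × Fin 3) => Ht (φ i) p.1 p.2)
    calc (0:ℝ) ≤ ∑ p : Fin 3 × Fin 3, (∑ i : Fin 8, Ht (φ i) p.1 p.2) ^ 2 := by positivity
      _ = ∑ i : Fin 8, ∑ j : Fin 8, ∑ p : Fin 3 × Fin 3, Ht (φ i) p.1 p.2 * Ht (φ j) p.1 p.2 :=
          h.symm
      _ = ∑ i : Fin 8, ∑ j : Fin 8, ((g i j) ^ 2 - 1/3) := by
          refine Finset.sum_congr rfl fun i _ => Finset.sum_congr rfl fun j _ => ?_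
          rw [Fintype.sum_prod_type, hgform]
          exact key2 _ _ (hn i) (hn j)
  -- inequality from the degree-4 kernel
  have ineqB : 0 ≤ ∑ i : Fin 8, ∑ j : Fin 8, ((g i j) ^ 4 - (6/7) * (g i j) ^ 2 + 3/35) := by
    have h := sum_sq_expand
      (fun (i : Fin 8) (p : Fin 3 × Fin 3 × Fin 3 × Fin 3) => Hf (φ i) p.1 p.2.1 p.2.2.1 p.2.2.2)
    calc (0:ℝ) ≤ ∑ p : Fin 3 × Fin 3 × Fin 3 × Fin 3,
          (∑ i : Fin 8, Hf (φ i) p.1 p.2.1 p.2.2.1 p.2.2.2) ^ 2 := by positivity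
      _ = ∑ i : Fin 8, ∑ j : Fin 8, ∑ p : Fin 3 × Fin 3 × Fin 3 × Fin 3,
            Hf (φ i) p.1 p.2.1 p.2.2.1 p.2.2.2 * Hf (φ j) p.1 p.2.1 p.2.2.1 p.2.2.2 := h.symm
      _ = _ := by
          refine Finset.sum_congr rfl fun i _ => Finset.sum_congr rfl fun j _ => ?_
          simp only [Fintype.sum_prod_type]
          rw [hgform]
          exact key4 _ _ (hn i) (hn j)
  -- combine the two inequalities
  have ineqC : 0 ≤ ∑ i : Fin 8, ∑ j : Fin 8,
      ((g i j) ^ 4 - (9/25) * (g i j) ^ 2 - 2/25) := by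
    have key : ∑ i : Fin 8, ∑ j : Fin 8, ((g i j) ^ 4 - (9/25) * (g i j) ^ 2 - 2/25)
        = (∑ i : Fin 8, ∑ j : Fin 8, ((g i j) ^ 4 - (6/7) * (g i j) ^ 2 + 3/35))
          + (87/175) * ∑ i : Fin 8, ∑ j : Fin 8, ((g i j) ^ 2 - 1/3) := by
      rw [Finset.mul_sum, ← Finset.sum_add_distrib]
      refine Finset.sum_congr rfl fun i _ => ?_
      rw [Finset.mul_sum, ← Finset.sum_add_distrib]
      exact Finset.sum_congr rfl fun j _ => by ring
    rw [key]
    have h87 := mul_nonneg (by norm_num : (0:ℝ) ≤ 87/175) ineqA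
    linarith
  -- off-diagonal entries are small
  have h9 : ∀ i j, i ≠ j → (g i j) ^ 2 < 9/25 := by
    intro i j hij
    have h := hoff i j hij
    have h1 : |g i j| ^ 2 < (3/5) ^ 2 :=
      pow_lt_pow_left₀ h (abs_nonneg _) (by norm_num)
    rw [sq_abs] at h1
    linarith
  -- rewrite the combined sum as an off-diagonal sum
  have hT : ∑ i : Fin 8, ∑ j : Fin 8, ((g i j) ^ 4 - (9/25) * (g i j) ^ 2 - 2/25)
      = ∑ i : Fin 8, ∑ j ∈ Finset.univ.erase i, (g i j) ^ 2 * ((g i j) ^ 2 - 9/25) := by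
    refine Finset.sum_congr rfl fun i _ => ?_
    rw [← Finset.add_sum_erase _ _ (Finset.mem_univ i)]
    have hs : ∑ j ∈ Finset.univ.erase i, ((g i j) ^ 4 - (9/25) * (g i j) ^ 2 - 2/25)
        = (∑ j ∈ Finset.univ.erase i, (g i j) ^ 2 * ((g i j) ^ 2 - 9/25))
          - ((Finset.univ.erase i).card : ℝ) * (2/25) := by
      rw [Finset.sum_sub_distrib, Finset.sum_const, nsmul_eq_mul]
      congr 1
      exact Finset.sum_congr rfl fun j _ => by ring
    rw [hs, hcard7 i, hdiag i]
    push_cast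
    ring
  rw [hT] at ineqC
  -- termwise nonpositivity
  have hterm : ∀ i : Fin 8, ∀ j ∈ Finset.univ.erase i,
      (g i j) ^ 2 * ((g i j) ^ 2 - 9/25) ≤ 0 := by
    intro i j hj
    have hij : i ≠ j := (Finset.ne_of_mem_erase hj).symm
    exact mul_nonpos_of_nonneg_of_nonpos (sq_nonneg _) (by linarith [h9 i j hij])
  have houter : ∀ i ∈ (Finset.univ : Finset (Fin 8)),
      ∑ j ∈ Finset.univ.erase i, (g i j) ^ 2 * ((g i j) ^ 2 - 9/25) ≤ 0 :=
    fun i _ => Finset.sum_nonpos (hterm i)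
  have htotal : ∑ i : Fin 8, ∑ j ∈ Finset.univ.erase i,
      (g i j) ^ 2 * ((g i j) ^ 2 - 9/25) = 0 :=
    le_antisymm (Finset.sum_nonpos houter) ineqC
  have hzero : ∀ i j, i ≠ j → g i j = 0 := by
    intro i j hij
    have h1 := (Finset.sum_eq_zero_iff_of_nonpos houter).mp htotal i (Finset.mem_univ i)
    have h2 := (Finset.sum_eq_zero_iff_of_nonpos (fun j hj => hterm i j hj)).mp h1 j
      (Finset.mem_erase.mpr ⟨hij.symm, Finset.mem_univ j⟩)
    rcases mul_eq_zero.mp h2 with h | h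
    · exact pow_eq_zero_iff (by norm_num) |>.mp h
    · exfalso; have := h9 i j hij; linarith
  -- final contradiction with the degree-2 inequality
  have hAval : ∑ i : Fin 8, ∑ j : Fin 8, ((g i j) ^ 2 - 1/3) = -40/3 := by
    have hrow : ∀ i : Fin 8, ∑ j : Fin 8, ((g i j) ^ 2 - 1/3) = -5/3 := by
      intro i
      rw [← Finset.add_sum_erase _ _ (Finset.mem_univ i), hdiag i]
      have : ∑ j ∈ Finset.univ.erase i, ((g i j) ^ 2 - 1/3)
          = ∑ _j ∈ Finset.univ.erase i, (-1/3 : ℝ) := by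
        refine Finset.sum_congr rfl fun j hj => ?_
        rw [hzero i j (Finset.ne_of_mem_erase hj).symm]
        norm_num
      rw [this, Finset.sum_const, hcard7 i, nsmul_eq_mul]
      norm_num
    rw [Finset.sum_congr rfl fun i _ => hrow i, Finset.sum_const, Finset.card_univ]
    norm_num
  rw [hAval] at ineqA
  linarith
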